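/- arXiv:2511.03323 — 4 statements merged into one kernel-verified Lean document; each statement's English description precedes it below -/
import Mathlib

section
/- Let l be a positive integer dividing ord_{nr}(q), the multiplicative order of q modulo nr. Then the sum over all positive divisors j of l of j·N_j equals gcd(n, (q^l−1)/r) if gcd(r, nr/gcd(nr, q^l−1)) = 1, and equals 0 if gcd(r, nr/gcd(nr, q^l−1)) > 1. -/
open scoped Classical

/-- The `q`-cyclotomic coset of `i` modulo `N`, with representatives taken in `{1, …, N}`. -/
noncomputable def cosetOf (q N i : ℕ) : Finset ℕ :=
  (Finset.Icc 1 N).filter (fun x => ∃ j : ℕ, x ≡ i * q ^ j [MOD N])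

/-- `Z_{n,r} = {1 + i r : 0 ≤ i ≤ n-1}`. -/
def Zset (n r : ℕ) : Finset ℕ := (Finset.range n).image (fun i => 1 + i * r)

/-- The collection of `q`-cyclotomic cosets contained in `Z_{n,r}`. -/
noncomputable def cosetsIn (q n r : ℕ) : Finset (Finset ℕ) :=
  (Zset n r).image (fun i => cosetOf q (n * r) i)

/-- `N_l`: the number of `q`-cyclotomic cosets of size `l` contained in `Z_{n,r}`. -/
noncomputable def Ncount (q n r l : ℕ) : ℕ :=
  ((cosetsIn q n r).filter (fun C => C.card = l)).card

/-- Coset leader: the smallest element of a coset. -/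
noncomputable def leader (C : Finset ℕ) : ℕ := sInf (C : Set ℕ)

/-- The sorted (increasing) list of coset leaders of the cosets of size `l` in `Z_{n,r}`. -/
noncomputable def leaderList (q n r l : ℕ) : List ℕ :=
  Finset.sort (((cosetsIn q n r).filter (fun C => C.card = l)).image leader) (· ≤ ·)

/-- `δ_i^{(l)}`: the `i`-th smallest coset leader (1-indexed). -/
noncomputable def delta (q n r l i : ℕ) : ℕ := (leaderList q n r l).getD (i - 1) 0

namespace CycAux

/-- Representative in `{1,…,N}` of a residue class. -/
noncomputable def rep (N : ℕ) (z : ZMod N) : ℕ := if z = 0 then N else z.val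

lemma rep_cast {N : ℕ} [NeZero N] (z : ZMod N) : ((rep N z : ℕ) : ZMod N) = z := by
  unfold rep
  split_ifs with h
  · simp [h]
  · exact ZMod.natCast_rightInverse z

lemma rep_mem {N : ℕ} [NeZero N] (z : ZMod N) : rep N z ∈ Finset.Icc 1 N := by
  have hN : 0 < N := Nat.pos_of_ne_zero (NeZero.ne N)
  unfold rep
  split_ifs with h
  · exact Finset.mem_Icc.2 ⟨hN, le_rfl⟩
  · have h1 : z.val ≠ 0 := fun hc => h ((ZMod.val_eq_zero z).1 hc)
    have h2 := ZMod.val_lt z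
    exact Finset.mem_Icc.2 ⟨by omega, by omega⟩

lemma rep_inj {N : ℕ} [NeZero N] : Function.Injective (rep N) := by
  intro a b h
  have := congrArg (fun t : ℕ => (t : ZMod N)) h
  simpa [rep_cast] using this

lemma rep_cast' {N : ℕ} [NeZero N] {x : ℕ} (hx : x ∈ Finset.Icc 1 N) :
    rep N ((x : ZMod N)) = x := by
  obtain ⟨h1, h2⟩ := Finset.mem_Icc.1 hx
  unfold rep
  split_ifs with h
  · have hd := (ZMod.natCast_eq_zero_iff x N).1 h
    have := Nat.le_of_dvd (by omega) hd
    omega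
  · rw [ZMod.val_natCast]
    have hxN : x ≠ N := by
      rintro rfl
      exact h (ZMod.natCast_self _)
    exact Nat.mod_eq_of_lt (by omega)

/-- The orbit of `z` under multiplication by `q` in `ZMod N`. -/
noncomputable def orb (q N : ℕ) (z : ZMod N) : Finset (ZMod N) :=
  Finset.image (fun j => z * (q : ZMod N) ^ j) (Finset.range (orderOf (q : ZMod N)))

lemma mem_orb {q N : ℕ} (hm : 0 < orderOf (q : ZMod N)) {z w : ZMod N} :
    w ∈ orb q N z ↔ ∃ j : ℕ, w = z * (q : ZMod N) ^ j := by
  simp only [orb, Finset.mem_image, Finset.mem_range]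
  constructor
  · rintro ⟨j, _, rfl⟩; exact ⟨j, rfl⟩
  · rintro ⟨j, rfl⟩
    exact ⟨j % orderOf ((q : ZMod N)), Nat.mod_lt _ hm, by rw [pow_mod_orderOf]⟩

lemma orb_eq_of_mem {q N : ℕ} (hm : 0 < orderOf (q : ZMod N)) {z w : ZMod N}
    (hw : w ∈ orb q N z) : orb q N w = orb q N z := by
  obtain ⟨j, rfl⟩ := (mem_orb hm).1 hw
  set m := orderOf ((q : ZMod N)) with hmdef
  have key : (q : ZMod N) ^ (j + (m - j % m)) = 1 := by
    have hmod := Nat.div_add_mod j m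
    have hlt : j % m < m := Nat.mod_lt _ hm
    have harith : j + (m - j % m) = m * (j / m + 1) := by
      rw [Nat.mul_add, Nat.mul_one]
      omega
    rw [harith, pow_mul, pow_orderOf_eq_one, one_pow]
  apply Finset.Subset.antisymm
  · intro x hx
    obtain ⟨k, rfl⟩ := (mem_orb hm).1 hx
    exact (mem_orb hm).2 ⟨j + k, by rw [pow_add, mul_assoc]⟩
  · intro x hx
    obtain ⟨k, rfl⟩ := (mem_orb hm).1 hx
    refine (mem_orb hm).2 ⟨(m - j % m) + k, ?_⟩
    rw [mul_assoc, ← pow_add,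
      show j + ((m - j % m) + k) = (j + (m - j % m)) + k by omega,
      pow_add, key, one_mul]

lemma orb_card_dvd_iff {q N : ℕ} (hm : 0 < orderOf (q : ZMod N)) (z : ZMod N) (l : ℕ) :
    (orb q N z).card ∣ l ↔ z * (q : ZMod N) ^ l = z := by
  set u := (q : ZMod N) with hu
  set m := orderOf u with hmdef
  have hex : ∃ t, 0 < t ∧ z * u ^ t = z := ⟨m, hm, by rw [pow_orderOf_eq_one, mul_one]⟩
  set p := Nat.find hex with hp
  obtain ⟨hp0, hpz⟩ := Nat.find_spec hex
  have hmin : ∀ t, 0 < t → t < p → z * u ^ t ≠ z := fun t ht hlt hc =>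
    Nat.find_min hex hlt ⟨ht, hc⟩
  have hmul : ∀ a, z * u ^ (p * a) = z := by
    intro a
    induction a with
    | zero => simp
    | succ a ih => rw [Nat.mul_succ, pow_add, ← mul_assoc, ih, hpz]
  have hred : ∀ t, z * u ^ t = z * u ^ (t % p) := by
    intro t
    conv_lhs => rw [← Nat.div_add_mod t p]
    rw [pow_add, ← mul_assoc, hmul]
  have hiff : ∀ t, z * u ^ t = z ↔ p ∣ t := by
    intro t
    constructor
    · intro h
      have h2 : z * u ^ (t % p) = z := by rw [← hred, h]
      rcases Nat.eq_zero_or_pos (t % p) with h0 | h0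
      · exact Nat.dvd_of_mod_eq_zero h0
      · exact absurd h2 (hmin _ h0 (Nat.mod_lt _ hp0))
    · rintro ⟨a, rfl⟩; exact hmul a
  have hcard : (orb q N z).card = p := by
    have hinj : ∀ a b, a < b → b < p → z * u ^ a = z * u ^ b → False := by
      intro a b hab hbp heq
      have h1 : z * u ^ (a + (p - b)) = z := by
        rw [pow_add, ← mul_assoc, heq, mul_assoc, ← pow_add,
          show b + (p - b) = p by omega, hpz]
      exact hmin _ (by omega) (by omega) h1
    have horb : orb q N z = Finset.image (fun j => z * u ^ j) (Finset.range p) := by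
      apply Finset.Subset.antisymm
      · intro x hx
        obtain ⟨j, rfl⟩ := (mem_orb hm).1 hx
        exact Finset.mem_image.2 ⟨j % p, Finset.mem_range.2 (Nat.mod_lt _ hp0), (hred j).symm⟩
      · intro x hx
        obtain ⟨j, _, rfl⟩ := Finset.mem_image.1 hx
        exact (mem_orb hm).2 ⟨j, rfl⟩
    rw [horb, Finset.card_image_of_injOn, Finset.card_range]
    intro a ha b hb hab
    simp only [Finset.coe_range, Set.mem_Iio] at ha hb
    rcases lt_trichotomy a b with h | h | h
    · exact absurd hab (fun hc => hinj a b h hb hc)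
    · exact h
    · exact absurd hab.symm (fun hc => hinj b a h ha hc)
  rw [hcard]
  exact (hiff l).symm

lemma mem_Zset_iff {n r : ℕ} (hn : 0 < n) (hr : 0 < r) {x : ℕ} :
    x ∈ Zset n r ↔ x ∈ Finset.Icc 1 (n * r) ∧ x % r = 1 % r := by
  simp only [Zset, Finset.mem_image, Finset.mem_range, Finset.mem_Icc]
  constructor
  · rintro ⟨k, hk, rfl⟩
    have h1 : (k + 1) * r ≤ n * r := Nat.mul_le_mul_right r hk
    have h2 : (k + 1) * r = k * r + r := by ring
    refine ⟨⟨by omega, by omega⟩, ?_⟩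
    simp [Nat.add_mul_mod_self_right]
  · rintro ⟨⟨h1, h2⟩, h3⟩
    have hmod : (1 : ℕ) ≡ x [MOD r] := h3.symm
    have hd : r ∣ x - 1 := (Nat.modEq_iff_dvd' h1).1 hmod
    obtain ⟨k, hk⟩ := hd
    have hcomm : n * r = r * n := Nat.mul_comm n r
    have hlt : r * k < r * n := by omega
    have hk2 : k * r = r * k := Nat.mul_comm k r
    exact ⟨k, Nat.lt_of_mul_lt_mul_left hlt, by omega⟩

lemma mem_cosetOf_iff {q N : ℕ} [NeZero N] (hm : 0 < orderOf (q : ZMod N)) (i x : ℕ) :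
    x ∈ cosetOf q N i ↔ x ∈ Finset.Icc 1 N ∧ ((x : ZMod N)) ∈ orb q N (i : ZMod N) := by
  simp only [cosetOf, Finset.mem_filter]
  constructor
  · rintro ⟨hx, j, hj⟩
    refine ⟨hx, (mem_orb hm).2 ⟨j, ?_⟩⟩
    have := (ZMod.natCast_eq_natCast_iff _ _ _).2 hj
    push_cast at this
    exact this
  · rintro ⟨hx, hz⟩
    obtain ⟨j, hj⟩ := (mem_orb hm).1 hz
    refine ⟨hx, j, ?_⟩
    rw [← ZMod.natCast_eq_natCast_iff]
    push_cast
    exact hj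

lemma cosetOf_eq_image {q N : ℕ} [NeZero N] (hm : 0 < orderOf (q : ZMod N)) (i : ℕ) :
    cosetOf q N i = Finset.image (rep N) (orb q N (i : ZMod N)) := by
  ext x
  rw [mem_cosetOf_iff hm]
  constructor
  · rintro ⟨h1, h2⟩
    exact Finset.mem_image.2 ⟨_, h2, rep_cast' h1⟩
  · rintro hx
    obtain ⟨z, hz, rfl⟩ := Finset.mem_image.1 hx
    exact ⟨rep_mem z, by rw [rep_cast]; exact hz⟩

lemma card_cosetOf {q N : ℕ} [NeZero N] (hm : 0 < orderOf (q : ZMod N)) (i : ℕ) :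
    (cosetOf q N i).card = (orb q N (i : ZMod N)).card := by
  rw [cosetOf_eq_image hm]
  exact Finset.card_image_of_injective _ rep_inj

lemma count_lem {n d r : ℕ} (hd : 0 < d) (hdn : d ∣ n) (hco : Nat.Coprime r d) :
    ((Finset.range n).filter (fun k => d ∣ 1 + k * r)).card = n / d := by
  haveI : NeZero d := ⟨hd.ne'⟩
  set z : ZMod d := -((r : ZMod d)⁻¹) with hz
  set k₀ := z.val with hk0
  have hk0d : k₀ < d := ZMod.val_lt z
  have hinv : (r : ZMod d) * (r : ZMod d)⁻¹ = 1 := ZMod.coe_mul_inv_eq_one r hco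
  have hsol : ((1 + k₀ * r : ℕ) : ZMod d) = 0 := by
    push_cast
    rw [show ((k₀ : ℕ) : ZMod d) = z from ZMod.natCast_rightInverse z, hz]
    have : (r : ZMod d)⁻¹ * (r : ZMod d) = 1 := by rw [mul_comm]; exact hinv
    rw [neg_mul, this]
    ring
  have hdvd0 : d ∣ 1 + k₀ * r := (ZMod.natCast_eq_zero_iff _ _).1 hsol
  have huniq : ∀ k, d ∣ 1 + k * r → k % d = k₀ := by
    intro k hk
    have h1 : ((1 + k * r : ℕ) : ZMod d) = 0 := (ZMod.natCast_eq_zero_iff _ _).2 hk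
    push_cast at h1
    have hs := hsol
    push_cast at hs
    have e1 : (k : ZMod d) * r = (k₀ : ZMod d) * r := by linear_combination h1 - hs
    have h2 : (k : ZMod d) = (k₀ : ZMod d) := by
      have h3 : (k : ZMod d) * ((r : ZMod d) * (r : ZMod d)⁻¹)
          = (k₀ : ZMod d) * ((r : ZMod d) * (r : ZMod d)⁻¹) := by
        linear_combination (e1) * (r : ZMod d)⁻¹
      rwa [hinv, mul_one, mul_one] at h3
    have h3 : k ≡ k₀ [MOD d] := (ZMod.natCast_eq_natCast_iff _ _ _).1 h2
    have h4 : k % d = k₀ % d := h3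
    rwa [Nat.mod_eq_of_lt hk0d] at h4
  rw [show n / d = (Finset.range (n / d)).card from (Finset.card_range _).symm]
  apply Finset.card_bij' (fun k _ => k / d) (fun t _ => k₀ + d * t)
  · intro k hk
    simp only [Finset.mem_filter, Finset.mem_range] at hk
    exact Finset.mem_range.2 (Nat.div_lt_div_of_lt_of_dvd hdn hk.1)
  · intro t ht
    simp only [Finset.mem_range] at ht
    simp only [Finset.mem_filter, Finset.mem_range]
    constructor
    · obtain ⟨c, rfl⟩ := hdn
      rw [Nat.mul_div_cancel_left c hd] at ht
      have h1 : d * (t + 1) ≤ d * c := Nat.mul_le_mul_left d ht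
      have h2 : d * (t + 1) = d * t + d := by ring
      omega
    · have h1 : 1 + (k₀ + d * t) * r = (1 + k₀ * r) + d * (t * r) := by ring
      rw [h1]
      exact Nat.dvd_add hdvd0 (Dvd.intro _ rfl)
  · intro k hk
    simp only [Finset.mem_filter, Finset.mem_range] at hk
    have h1 := huniq k hk.2
    have h2 := Nat.div_add_mod k d
    omega
  · intro t ht
    rw [Nat.add_mul_div_left _ _ hd, Nat.div_eq_of_lt hk0d, zero_add]

end CycAux

open CycAux in
theorem stmt0 (q n r l : ℕ) (hq : IsPrimePow q) (hn : 0 < n)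
    (hco : Nat.Coprime n q) (hr : 0 < r) (hrdvd : r ∣ q - 1)
    (hl : 0 < l) (hld : l ∣ orderOf (q : ZMod (n * r))) :
    ∑ j ∈ l.divisors, j * Ncount q n r j =
      if Nat.gcd r ((n * r) / Nat.gcd (n * r) (q ^ l - 1)) = 1
      then Nat.gcd n ((q ^ l - 1) / r) else 0 := by
  have hq2 : 2 ≤ q := hq.two_le
  have hN : 0 < n * r := Nat.mul_pos hn hr
  haveI : NeZero (n * r) := ⟨hN.ne'⟩
  -- coprimality of q with n*r
  have hcoq1 : Nat.Coprime q (q - 1) := by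
    have h1 := Nat.dvd_sub (Nat.gcd_dvd_left q (q - 1)) (Nat.gcd_dvd_right q (q - 1))
    have h2 : q - (q - 1) = 1 := by omega
    rw [h2] at h1
    exact Nat.dvd_one.1 h1
  have hcoqr : Nat.Coprime q r := hcoq1.coprime_dvd_right hrdvd
  have hcoqN : Nat.Coprime q (n * r) := Nat.Coprime.mul_right hco.symm hcoqr
  have hm : 0 < orderOf (q : ZMod (n * r)) := by
    have h1 : ((ZMod.unitOfCoprime q hcoqN : (ZMod (n * r))ˣ) : ZMod (n * r)) = (q : ZMod (n * r)) :=
      ZMod.coe_unitOfCoprime q hcoqN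
    rw [← h1, orderOf_units]
    exact orderOf_pos _
  have hq1r : q ≡ 1 [MOD r] := ((Nat.modEq_iff_dvd' (by omega)).2 hrdvd).symm
  -- the collection of cosets whose size divides l
  set s : Finset (Finset ℕ) := (cosetsIn q n r).filter (fun C => C.card ∣ l) with hs
  set S : Finset ℕ :=
    (Zset n r).filter (fun i => ((i : ZMod (n * r))) * (q : ZMod (n * r)) ^ l = (i : ZMod (n * r)))
    with hS
  -- cosets of elements of Zset stay in Zset
  have hsub : ∀ i ∈ Zset n r, cosetOf q (n * r) i ⊆ Zset n r := by
    intro i hi x hx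
    simp only [cosetOf, Finset.mem_filter] at hx
    obtain ⟨hxI, j, hj⟩ := hx
    rw [mem_Zset_iff hn hr]
    refine ⟨hxI, ?_⟩
    have hir : i % r = 1 % r := ((mem_Zset_iff hn hr).1 hi).2
    have h1 : x ≡ i * q ^ j [MOD r] := hj.of_dvd ⟨n, (Nat.mul_comm n r)⟩
    have h2 : i * q ^ j ≡ i * 1 ^ j [MOD r] := Nat.ModEq.mul (Nat.ModEq.refl i) (hq1r.pow j)
    have h3 : x ≡ i [MOD r] := h1.trans (by simpa using h2)
    exact h3.trans hir
  -- Step 1 : the weighted sum equals the sum of cardinalities over s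
  have step1 : ∑ j ∈ l.divisors, j * Ncount q n r j = ∑ C ∈ s, C.card := by
    rw [← Finset.sum_fiberwise_of_maps_to (g := Finset.card) (t := l.divisors)
      (fun C hC => Nat.mem_divisors.2 ⟨(Finset.mem_filter.1 hC).2, hl.ne'⟩) (fun C => C.card)]
    apply Finset.sum_congr rfl
    intro j hj
    have hjl : j ∣ l := (Nat.mem_divisors.1 hj).1
    have hfe : s.filter (fun C => C.card = j) = (cosetsIn q n r).filter (fun C => C.card = j) := by
      rw [hs, Finset.filter_filter]
      exact Finset.filter_congr (fun C _ => ⟨fun h => h.2, fun h => ⟨h ▸ hjl, h⟩⟩)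
    rw [hfe]
    rw [Finset.sum_congr rfl (fun C hC => (Finset.mem_filter.1 hC).2), Finset.sum_const,
      smul_eq_mul, mul_comm]
    rfl
  -- Step 2 : distinct cosets are disjoint
  have hdisj : ∀ C₁ ∈ s, ∀ C₂ ∈ s, C₁ ≠ C₂ → Disjoint C₁ C₂ := by
    intro C₁ h1 C₂ h2 hne
    obtain ⟨i₁, hi₁, rfl⟩ := Finset.mem_image.1 (Finset.mem_filter.1 h1).1
    obtain ⟨i₂, hi₂, rfl⟩ := Finset.mem_image.1 (Finset.mem_filter.1 h2).1
    rw [Finset.disjoint_left]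
    intro x hx1 hx2
    apply hne
    have e1 := ((mem_cosetOf_iff hm i₁ x).1 hx1).2
    have e2 := ((mem_cosetOf_iff hm i₂ x).1 hx2).2
    have horb : orb q (n * r) ((i₁ : ZMod (n * r))) = orb q (n * r) ((i₂ : ZMod (n * r))) := by
      rw [← orb_eq_of_mem hm e1, orb_eq_of_mem hm e2]
    ext y
    rw [mem_cosetOf_iff hm, mem_cosetOf_iff hm, horb]
  -- Step 3 : the union of the cosets in s is S
  have step3 : s.biUnion id = S := by
    ext x
    simp only [Finset.mem_biUnion, id]
    constructor
    · rintro ⟨C, hC, hxC⟩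
      obtain ⟨hCc, hCl⟩ := Finset.mem_filter.1 hC
      obtain ⟨i, hi, rfl⟩ := Finset.mem_image.1 hCc
      have hx2 := (mem_cosetOf_iff hm i x).1 hxC
      have horbeq : orb q (n * r) ((x : ZMod (n * r))) = orb q (n * r) ((i : ZMod (n * r))) :=
        orb_eq_of_mem hm hx2.2
      rw [hS, Finset.mem_filter]
      refine ⟨hsub i hi hxC, ?_⟩
      have hdl : (orb q (n * r) ((x : ZMod (n * r)))).card ∣ l := by
        rw [horbeq, ← card_cosetOf hm]
        exact hCl
      exact (orb_card_dvd_iff hm _ l).1 hdl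
    · intro hx
      obtain ⟨hxZ, hxl⟩ := Finset.mem_filter.1 hx
      refine ⟨cosetOf q (n * r) x, ?_, ?_⟩
      · rw [hs, Finset.mem_filter]
        refine ⟨Finset.mem_image.2 ⟨x, hxZ, rfl⟩, ?_⟩
        rw [card_cosetOf hm, orb_card_dvd_iff hm _ l]
        exact hxl
      · rw [mem_cosetOf_iff hm]
        refine ⟨((mem_Zset_iff hn hr).1 hxZ).1, (mem_orb hm).2 ⟨0, by simp⟩⟩
  have step2 : ∑ C ∈ s, C.card = S.card := by
    rw [← step3]
    exact (Finset.card_biUnion hdisj).symm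
  -- arithmetic setup
  have hql : 1 ≤ q ^ l := Nat.one_le_pow l q (by omega)
  have hrq : r ∣ q ^ l - 1 := hrdvd.trans (by simpa using Nat.sub_dvd_pow_sub_pow q 1 l)
  set b := q ^ l - 1 with hb
  set e := Nat.gcd n (b / r) with he
  have hg : Nat.gcd (n * r) b = e * r := by
    calc Nat.gcd (n * r) b = Nat.gcd (n * r) ((b / r) * r) := by rw [Nat.div_mul_cancel hrq]
    _ = Nat.gcd n (b / r) * r := Nat.gcd_mul_right _ _ _
  have he0 : 0 < e := Nat.gcd_pos_of_pos_left _ hn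
  have hen : e ∣ n := Nat.gcd_dvd_left _ _
  set d := (n * r) / Nat.gcd (n * r) b with hd
  have hdne : d = n / e := by
    rw [hd, hg]
    exact Nat.mul_div_mul_right n e hr
  have hdn : d ∣ n := by
    rw [hdne]
    exact Nat.div_dvd_of_dvd hen
  have hd0 : 0 < d := by
    rw [hdne]
    exact Nat.div_pos (Nat.le_of_dvd hn hen) he0
  have hnd : n / d = e := by
    rw [hdne]
    exact Nat.div_div_self hen hn.ne'
  -- membership condition
  have hcond : ∀ i : ℕ,
      (((i : ZMod (n * r))) * (q : ZMod (n * r)) ^ l = (i : ZMod (n * r))) ↔ d ∣ i := by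
    intro i
    have hle : i ≤ i * q ^ l := Nat.le_mul_of_pos_right i (by positivity)
    have h3 : i * q ^ l - i = i * b := by rw [hb, Nat.mul_sub, Nat.mul_one]
    have h1 : (((i : ZMod (n * r))) * (q : ZMod (n * r)) ^ l = (i : ZMod (n * r)))
        ↔ (n * r) ∣ i * b := by
      constructor
      · intro h
        have hmeq : (i * q ^ l : ℕ) ≡ (i : ℕ) [MOD n * r] := by
          rw [← ZMod.natCast_eq_natCast_iff]
          push_cast
          exact h
        have h2 := (Nat.modEq_iff_dvd' hle).1 hmeq.symm
        rwa [h3] at h2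
      · intro h
        have hmeq : (i : ℕ) ≡ (i * q ^ l : ℕ) [MOD n * r] :=
          (Nat.modEq_iff_dvd' hle).2 (by rw [h3]; exact h)
        have := (ZMod.natCast_eq_natCast_iff _ _ _).2 hmeq.symm
        push_cast at this
        exact this
    rw [h1]
    have hg0 : 0 < Nat.gcd (n * r) b := Nat.gcd_pos_of_pos_left _ hN
    constructor
    · intro h
      have hcop : Nat.Coprime d (b / Nat.gcd (n * r) b) := Nat.coprime_div_gcd_div_gcd hg0
      have hNe : d * Nat.gcd (n * r) b = n * r := Nat.div_mul_cancel (Nat.gcd_dvd_left _ _)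
      have hbe : (b / Nat.gcd (n * r) b) * Nat.gcd (n * r) b = b :=
        Nat.div_mul_cancel (Nat.gcd_dvd_right _ _)
      have h' : d * Nat.gcd (n * r) b ∣ i * ((b / Nat.gcd (n * r) b) * Nat.gcd (n * r) b) := by
        rw [hNe, hbe]
        exact h
      rw [← mul_assoc] at h'
      have h'' : d ∣ i * (b / Nat.gcd (n * r) b) := (Nat.mul_dvd_mul_iff_right hg0).1 h'
      exact hcop.dvd_of_dvd_mul_right h''
    · intro h
      have hNe : d * Nat.gcd (n * r) b = n * r := Nat.div_mul_cancel (Nat.gcd_dvd_left _ _)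
      have h1' : n * r ∣ i * Nat.gcd (n * r) b := by
        calc n * r = d * Nat.gcd (n * r) b := hNe.symm
        _ ∣ i * Nat.gcd (n * r) b := Nat.mul_dvd_mul_right h _
      exact h1'.trans (Nat.mul_dvd_mul_left i (Nat.gcd_dvd_right _ _))
  -- express the cardinality of S as a count over range n
  have hScard : S.card = ((Finset.range n).filter (fun k => d ∣ 1 + k * r)).card := by
    have hSe : S = Finset.image (fun k => 1 + k * r)
        ((Finset.range n).filter (fun k => d ∣ 1 + k * r)) := by
      rw [hS]
      ext x
      simp only [Zset, Finset.mem_filter, Finset.mem_image, Finset.mem_range]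
      constructor
      · rintro ⟨⟨k, hk, rfl⟩, hP⟩
        exact ⟨k, ⟨hk, (hcond _).1 hP⟩, rfl⟩
      · rintro ⟨k, ⟨hk, hdk⟩, rfl⟩
        exact ⟨⟨k, hk, rfl⟩, (hcond _).2 hdk⟩
    rw [hSe]
    apply Finset.card_image_of_injective
    intro a b' hab
    simp only at hab
    exact Nat.eq_of_mul_eq_mul_right hr (by omega)
  rw [step1, step2, hScard]
  by_cases hcase : Nat.gcd r d = 1
  · rw [if_pos hcase, count_lem hd0 hdn hcase, hnd]
  · rw [if_neg hcase]
    rw [Finset.card_eq_zero, Finset.filter_eq_empty_iff]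
    intro k _ hk
    apply hcase
    have h1 : Nat.gcd r d ∣ d := Nat.gcd_dvd_right r d
    have h2 : Nat.gcd r d ∣ r := Nat.gcd_dvd_left r d
    have h3 : Nat.gcd r d ∣ 1 + k * r := h1.trans hk
    have h4 : Nat.gcd r d ∣ k * r := Dvd.dvd.mul_left h2 k
    have h5 : Nat.gcd r d ∣ 1 := by
      have := Nat.dvd_sub h3 h4
      simpa using this
    exact Nat.dvd_one.1 h5
end

section
/- Let l be a positive integer with N_l > 0 and let i be an integer with 1 ≤ i ≤ N_l. Then δ_i^{(l)} ≥ nr·(1 + (⌈qi/(q−1)⌉ − 2)·r)/gcd(nr, q^l−1), and consequently δ_i^{(l)} ≥ nr²·(i−1)/gcd(nr, q^l−1) + nr/gcd(nr, q^l−1). -/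
open scoped Classical

lemma mem_cosetOf {q N x y : ℕ} :
    y ∈ cosetOf q N x ↔ (y ∈ Finset.Icc 1 N ∧ ∃ j : ℕ, y ≡ x * q ^ j [MOD N]) := by
  simp [cosetOf]

lemma rep_unique {N y z : ℕ} (hy : y ∈ Finset.Icc 1 N) (hz : z ∈ Finset.Icc 1 N)
    (h : y ≡ z [MOD N]) : y = z := by
  simp only [Finset.mem_Icc] at hy hz
  rcases le_total y z with hle | hle
  · have hd := (Nat.modEq_iff_dvd' hle).1 h
    rcases Nat.eq_zero_or_pos (z - y) with h0 | h0
    · omega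
    · exact absurd (Nat.le_of_dvd h0 hd) (by omega)
  · have hd := (Nat.modEq_iff_dvd' hle).1 h.symm
    rcases Nat.eq_zero_or_pos (y - z) with h0 | h0
    · omega
    · exact absurd (Nat.le_of_dvd h0 hd) (by omega)

lemma exists_pow_modEq_one {q N : ℕ} (hco : Nat.Coprime q N) (hN : 0 < N) :
    ∃ e, 0 < e ∧ q ^ e ≡ 1 [MOD N] :=
  ⟨N.totient, Nat.totient_pos.2 hN, Nat.ModEq.pow_totient hco⟩

lemma cosetOf_symm {q N x y : ℕ} (hco : Nat.Coprime q N) (hN : 0 < N)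
    (hy : y ∈ cosetOf q N x) (hx : x ∈ Finset.Icc 1 N) : x ∈ cosetOf q N y := by
  obtain ⟨hy1, j, hj⟩ := mem_cosetOf.1 hy
  obtain ⟨e, he, hee⟩ := exists_pow_modEq_one hco hN
  refine mem_cosetOf.2 ⟨hx, j * (e - 1), ?_⟩
  have h2 : (x * q ^ j) * q ^ (j * (e - 1)) = x * (q ^ e) ^ j := by
    obtain ⟨e', rfl⟩ : ∃ e', e = e' + 1 := ⟨e - 1, by omega⟩
    rw [mul_assoc, ← pow_add, ← pow_mul]
    congr 2
    simp [Nat.add_sub_cancel, Nat.mul_add, Nat.mul_comm]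
    ring
  have h3 : x * (q ^ e) ^ j ≡ x [MOD N] := by
    calc x * (q ^ e) ^ j ≡ x * 1 ^ j [MOD N] := Nat.ModEq.mul_left _ (hee.pow j)
      _ = x := by simp
  exact ((hj.mul_right _).trans (h2 ▸ h3)).symm

lemma cosetOf_trans {q N x y z : ℕ} (hy : y ∈ cosetOf q N x) (hz : z ∈ cosetOf q N y) :
    z ∈ cosetOf q N x := by
  obtain ⟨hy1, j, hj⟩ := mem_cosetOf.1 hy
  obtain ⟨hz1, k, hk⟩ := mem_cosetOf.1 hz
  refine mem_cosetOf.2 ⟨hz1, j + k, ?_⟩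
  calc z ≡ y * q ^ k [MOD N] := hk
    _ ≡ (x * q ^ j) * q ^ k [MOD N] := hj.mul_right _
    _ = x * q ^ (j + k) := by rw [mul_assoc, pow_add]

lemma cosetOf_eq_of_mem {q N x y : ℕ} (hco : Nat.Coprime q N) (hN : 0 < N)
    (hy : y ∈ cosetOf q N x) (hx : x ∈ Finset.Icc 1 N) : cosetOf q N y = cosetOf q N x := by
  ext z
  constructor
  · exact fun hz => cosetOf_trans hy hz
  · exact fun hz => cosetOf_trans (cosetOf_symm hco hN hy hx) hz

lemma self_mem_cosetOf {q N x : ℕ} (hx : x ∈ Finset.Icc 1 N) : x ∈ cosetOf q N x :=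
  mem_cosetOf.2 ⟨hx, 0, by simpa using Nat.ModEq.rfl⟩

noncomputable def rep (N z : ℕ) : ℕ := if z % N = 0 then N else z % N

lemma rep_mem {N : ℕ} (hN : 0 < N) (z : ℕ) : rep N z ∈ Finset.Icc 1 N := by
  unfold rep
  split <;> simp only [Finset.mem_Icc] <;>
    first
      | omega
      | exact ⟨by omega, le_of_lt (Nat.mod_lt _ hN)⟩

lemma rep_modEq {N : ℕ} (hN : 0 < N) (z : ℕ) : rep N z ≡ z [MOD N] := by
  unfold rep Nat.ModEq
  split
  next h => rw [Nat.mod_self, h]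
  next h => exact Nat.mod_mod_of_dvd z dvd_rfl

lemma modEq_of_card_eq {q N x l : ℕ} (hco : Nat.Coprime q N) (hN : 0 < N)
    (hx : x ∈ Finset.Icc 1 N) (hcard : (cosetOf q N x).card = l) :
    x * q ^ l ≡ x [MOD N] := by
  have hex : ∃ p, 0 < p ∧ x * q ^ p ≡ x [MOD N] := by
    refine ⟨N.totient, Nat.totient_pos.2 hN, ?_⟩
    calc x * q ^ N.totient ≡ x * 1 [MOD N] := Nat.ModEq.mul_left _ (Nat.ModEq.pow_totient hco)
      _ = x := by ring
  set p := Nat.find hex with hpdef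
  obtain ⟨hppos, hp⟩ := Nat.find_spec hex
  have periodic : ∀ j, x * q ^ (j + p) ≡ x * q ^ j [MOD N] := by
    intro j
    calc x * q ^ (j + p) = (x * q ^ p) * q ^ j := by rw [pow_add]; ring
      _ ≡ x * q ^ j [MOD N] := hp.mul_right _
  have red : ∀ j, x * q ^ j ≡ x * q ^ (j % p) [MOD N] := by
    intro j
    induction j using Nat.strong_induction_on with
    | _ j ih =>
      by_cases hj : j < p
      · rw [Nat.mod_eq_of_lt hj]
      · have hj2 : j - p + p = j := by omega
        calc x * q ^ j = x * q ^ (j - p + p) := by rw [hj2]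
          _ ≡ x * q ^ (j - p) [MOD N] := periodic _
          _ ≡ x * q ^ ((j - p) % p) [MOD N] := ih _ (by omega)
          _ = x * q ^ (j % p) := by
              have hmm : (j - p) % p = j % p := by
                conv_rhs => rw [← hj2]
                rw [Nat.add_mod_right]
              rw [hmm]
  have himg : cosetOf q N x = (Finset.range p).image (fun j => rep N (x * q ^ j)) := by
    ext y
    constructor
    · intro hy
      obtain ⟨hy1, j, hj⟩ := mem_cosetOf.1 hy
      refine Finset.mem_image.2 ⟨j % p, Finset.mem_range.2 (Nat.mod_lt _ hppos), ?_⟩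
      exact rep_unique (rep_mem hN _) hy1
        ((rep_modEq hN _).trans ((red j).symm.trans hj.symm))
    · intro hy
      obtain ⟨j, _, rfl⟩ := Finset.mem_image.1 hy
      exact mem_cosetOf.2 ⟨rep_mem hN _, j, rep_modEq hN _⟩
  have key : ∀ a b : ℕ, a < b → b < p → rep N (x * q ^ a) = rep N (x * q ^ b) → False := by
    intro a b hlt hb hab
    have hmod : x * q ^ a ≡ x * q ^ b [MOD N] :=
      ((rep_modEq hN (x * q ^ a)).symm.trans (hab ▸ rep_modEq hN (x * q ^ b)))
    have hb' : b = b - a + a := by omega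
    have hsplit : x * q ^ b = q ^ a * (x * q ^ (b - a)) := by
      calc x * q ^ b = x * q ^ (b - a + a) := by rw [← hb']
        _ = q ^ a * (x * q ^ (b - a)) := by rw [pow_add]; ring
    have hcan : x ≡ x * q ^ (b - a) [MOD N] := by
      apply Nat.ModEq.cancel_left_of_coprime (c := q ^ a)
      · exact ((hco.pow_left a).symm : Nat.Coprime N (q ^ a))
      · calc q ^ a * x = x * q ^ a := by ring
          _ ≡ x * q ^ b [MOD N] := hmod
          _ = q ^ a * (x * q ^ (b - a)) := hsplit
    have hmin : ¬(0 < b - a ∧ x * q ^ (b - a) ≡ x [MOD N]) := Nat.find_min hex (by omega)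
    exact hmin ⟨by omega, hcan.symm⟩
  have hinj : Set.InjOn (fun j => rep N (x * q ^ j)) (Finset.range p : Set ℕ) := by
    intro a ha b hb hab
    simp only [Finset.coe_range, Set.mem_Iio] at ha hb
    simp only at hab
    rcases lt_trichotomy a b with h | h | h
    · exact absurd (key a b h hb hab) (fun f => f)
    · exact h
    · exact absurd (key b a h ha hab.symm) (fun f => f)
  have hcardp : (cosetOf q N x).card = p := by
    rw [himg, Finset.card_image_of_injOn hinj, Finset.card_range]
  have : p = l := by omega
  exact this ▸ hp

lemma div_gcd_dvd {N x d : ℕ} (hN : 0 < N) (hd : 0 < d) (h : N ∣ x * d) :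
    N / N.gcd d ∣ x := by
  have hg : 0 < N.gcd d := Nat.gcd_pos_of_pos_left _ hN
  have h1 : (N / N.gcd d) * N.gcd d ∣ (x * (d / N.gcd d)) * N.gcd d := by
    rw [Nat.div_mul_cancel (Nat.gcd_dvd_left _ _), mul_assoc,
      Nat.div_mul_cancel (Nat.gcd_dvd_right _ _)]
    exact h
  have h2 : N / N.gcd d ∣ x * (d / N.gcd d) := (Nat.mul_dvd_mul_iff_right hg).1 h1
  exact (Nat.coprime_div_gcd_div_gcd hg).dvd_of_dvd_mul_right h2

set_option maxHeartbeats 4000000 in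
theorem stmt2 (q n r : ℕ) (hq : IsPrimePow q) (hn : 0 < n)
    (hco : Nat.Coprime n q) (hr : 0 < r) (hrdvd : r ∣ q - 1)
    (l : ℕ) (hl : 0 < l) (hNl : 0 < Ncount q n r l)
    (i : ℕ) (hi1 : 1 ≤ i) (hi2 : i ≤ Ncount q n r l) :
    ((n * r : ℚ) * (1 + ((⌈(q * i : ℚ) / ((q : ℚ) - 1)⌉ : ℚ) - 2) * r)) /
        (Nat.gcd (n * r) (q ^ l - 1) : ℚ) ≤ (delta q n r l i : ℚ) ∧
    ((n * r : ℚ) * (r : ℚ) * ((i : ℚ) - 1)) / (Nat.gcd (n * r) (q ^ l - 1) : ℚ) +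
        (n * r : ℚ) / (Nat.gcd (n * r) (q ^ l - 1) : ℚ) ≤ (delta q n r l i : ℚ) := by
  classical
  -- basic setup
  set N := n * r with hNdef
  have hN : 0 < N := Nat.mul_pos hn hr
  have hq2 : 2 ≤ q := hq.two_le
  have hq1r : q ≡ 1 [MOD r] := ((Nat.modEq_iff_dvd' (by omega)).2 hrdvd).symm
  have hqr : Nat.Coprime q r := by
    have hq' : Nat.Coprime q (q - 1) := by
      have h2 : q = (q - 1) + 1 := by omega
      rw [h2]; simp
    exact Nat.Coprime.coprime_dvd_right hrdvd hq'
  have hqN : Nat.Coprime q N := (hco.symm.mul_right hqr)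
  have hd : 0 < q ^ l - 1 := by
    have h2l : 2 ≤ q ^ l := by
      calc 2 = 2 ^ 1 := by norm_num
        _ ≤ q ^ 1 := Nat.pow_le_pow_left hq2 1
        _ ≤ q ^ l := Nat.pow_le_pow_right (by omega) hl
    omega
  set g := Nat.gcd N (q ^ l - 1) with hgdef
  have hgpos : 0 < g := Nat.gcd_pos_of_pos_left _ hN
  have hgdvdN : g ∣ N := Nat.gcd_dvd_left _ _
  set m := N / g with hmdef
  have hmg : m * g = N := Nat.div_mul_cancel hgdvdN
  have hm : 0 < m := Nat.div_pos (Nat.le_of_dvd hN hgdvdN) hgpos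
  -- the finset of leaders
  set F : Finset ℕ :=
    ((cosetsIn q n r).filter (fun C => C.card = l)).image leader with hFdef
  -- basic facts about cosets in the filtered family
  have hCoset : ∀ C ∈ (cosetsIn q n r).filter (fun C => C.card = l),
      leader C ∈ C ∧ C = cosetOf q N (leader C) ∧ C.card = l ∧
      leader C ≡ 1 [MOD r] := by
    intro C hC
    obtain ⟨hC1, hC2⟩ := Finset.mem_filter.1 hC
    rw [cosetsIn] at hC1
    rw [← hNdef] at hC1
    obtain ⟨z, hz, hCz⟩ := Finset.mem_image.1 hC1
    rw [Zset] at hz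
    obtain ⟨t, ht, hzt⟩ := Finset.mem_image.1 hz
    have hzIcc : z ∈ Finset.Icc 1 N := by
      simp only [Finset.mem_range] at ht
      simp only [Finset.mem_Icc]
      constructor
      · omega
      · subst hzt
        calc 1 + t * r ≤ 1 + (n - 1) * r := by
              have : t ≤ n - 1 := by omega
              exact Nat.add_le_add_left (Nat.mul_le_mul_right r this) 1
          _ ≤ n * r := by
              have h1 : (n - 1) * r + r = n * r := by
                have : (n - 1) + 1 = n := by omega
                calc (n - 1) * r + r = ((n - 1) + 1) * r := by ring
                  _ = n * r := by rw [this]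
              omega
    have hzC : z ∈ C := by
      rw [← hCz]
      exact self_mem_cosetOf hzIcc
    have hCne : (C : Set ℕ).Nonempty := ⟨z, hzC⟩
    have hlC : leader C ∈ C := Nat.sInf_mem hCne
    have hlCz : leader C ∈ cosetOf q N z := by
      rw [hCz]
      exact hlC
    have hlz : cosetOf q N (leader C) = cosetOf q N z :=
      cosetOf_eq_of_mem hqN hN hlCz hzIcc
    have hz1 : z ≡ 1 [MOD r] := by
      subst hzt
      have : r ∣ (1 + t * r) - 1 := ⟨t, by rw [Nat.add_sub_cancel_left, Nat.mul_comm]⟩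
      exact ((Nat.modEq_iff_dvd' (by omega)).2 this).symm
    refine ⟨hlC, by rw [hlz]; exact hCz.symm, hC2, ?_⟩
    obtain ⟨hIcc, j, hj⟩ := mem_cosetOf.1 hlCz
    have hzq : z * q ^ j ≡ 1 * 1 ^ j [MOD r] :=
      Nat.ModEq.mul hz1 (hq1r.pow j)
    calc leader C ≡ z * q ^ j [MOD r] := (Nat.ModEq.of_dvd ⟨n, by rw [hNdef]; ring⟩ hj)
      _ ≡ 1 [MOD r] := by simpa using hzq
  -- facts about members of F
  have hFmem : ∀ x ∈ F, x ∈ Finset.Icc 1 N ∧ m ∣ x ∧ x ≡ 1 [MOD r] ∧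
      leader (cosetOf q N x) = x := by
    intro x hx
    obtain ⟨C, hC, hCx⟩ := Finset.mem_image.1 hx
    obtain ⟨hlC, hCeq, hCl, hl1⟩ := hCoset C hC
    subst hCx
    have hlCC : leader C ∈ cosetOf q N (leader C) := by
      rw [← hCeq]
      exact hlC
    have hxIcc : leader C ∈ Finset.Icc 1 N := (mem_cosetOf.1 hlCC).1
    have hmodeq : leader C * q ^ l ≡ leader C [MOD N] := by
      apply modEq_of_card_eq hqN hN hxIcc
      rw [← hCeq]; exact hCl
    have hdvd : N ∣ leader C * (q ^ l - 1) := by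
      have h2 := (Nat.modEq_iff_dvd' (by
        calc leader C = leader C * 1 := by ring
          _ ≤ leader C * q ^ l := Nat.mul_le_mul_left _ (Nat.one_le_pow _ _ (by omega)))).1 hmodeq.symm
      have h3 : leader C * q ^ l - leader C = leader C * (q ^ l - 1) := by
        rw [Nat.mul_sub, Nat.mul_one]
      rwa [h3] at h2
    exact ⟨hxIcc, div_gcd_dvd hN hd hdvd, hl1, by rw [← hCeq]⟩
  -- leaders are minimal in their coset
  have hFmin : ∀ x ∈ F, ∀ y ∈ cosetOf q N x, x ≤ y := by
    intro x hx y hy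
    have h4 := (hFmem x hx).2.2.2
    calc x = leader (cosetOf q N x) := h4.symm
      _ ≤ y := Nat.sInf_le hy
  -- injectivity of leader gives |F| = Ncount
  have hFcard : F.card = Ncount q n r l := by
    rw [hFdef, Ncount]
    apply Finset.card_image_of_injOn
    intro C hC C' hC' hCC'
    obtain ⟨h1, h2, _, _⟩ := hCoset C (by simpa using hC)
    obtain ⟨h1', h2', _, _⟩ := hCoset C' (by simpa using hC')
    rw [h2, h2', hCC']
  -- the sorted list
  set L := leaderList q n r l with hLdef
  have hLF : L = Finset.sort F (· ≤ ·) := rfl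
  have hlen : L.length = Ncount q n r l := by
    rw [hLF, Finset.length_sort, hFcard]
  have hilen : i - 1 < L.length := by omega
  set δ := delta q n r l i with hδdef
  have hδget : δ = L[i-1] := by
    rw [hδdef, delta, ← hLdef]
    exact List.getD_eq_getElem L 0 hilen
  have hδF : δ ∈ F := by
    rw [← Finset.mem_sort (α := ℕ) (· ≤ ·), ← hLF, hδget]
    exact List.getElem_mem hilen
  obtain ⟨hδIcc, hδm, hδ1, _⟩ := hFmem δ hδF
  have hδ1' : 1 ≤ δ := (Finset.mem_Icc.1 hδIcc).1
  -- at least i elements of F are ≤ δ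
  set F' := F.filter (fun x => x ≤ δ) with hF'def
  have hF'card : i ≤ F'.card := by
    have hnd : (L.take i).Nodup :=
      (List.take_sublist i L).nodup (by rw [hLF]; exact Finset.sort_nodup _ _)
    have hlentake : (L.take i).length = i := by
      rw [List.length_take]; omega
    have hsub : (L.take i).toFinset ⊆ F' := by
      intro x hxt
      have hxmem : x ∈ L.take i := List.mem_toFinset.1 hxt
      obtain ⟨j, hj, hjx⟩ := List.getElem_of_mem hxmem
      have hj' : j < i := by omega
      have hjL : j < L.length := by omega
      have hxL : x = L[j] := by rw [← hjx, List.getElem_take]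
      have hsorted : List.Pairwise (· ≤ ·) L := by rw [hLF]; exact Finset.pairwise_sort _ _
      have hxle : x ≤ δ := by
        rw [hxL, hδget]
        exact hsorted.rel_get_of_le (a := ⟨j, hjL⟩) (b := ⟨i-1, hilen⟩) (Fin.mk_le_mk.2 (by omega))
      refine Finset.mem_filter.2 ⟨?_, hxle⟩
      rw [← Finset.mem_sort (α := ℕ) (· ≤ ·), ← hLF]
      exact (List.take_sublist i L).mem hxmem
    calc i = (L.take i).toFinset.card := by
          rw [List.toFinset_card_of_nodup hnd, hlentake]
      _ ≤ F'.card := Finset.card_le_card hsub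
  -- coprimality of m and r
  have hmr : Nat.Coprime m r := by
    have h1 : Nat.gcd m r ∣ δ := (Nat.gcd_dvd_left m r).trans hδm
    have h2 : Nat.gcd m r ∣ δ - 1 :=
      (Nat.gcd_dvd_right m r).trans ((Nat.modEq_iff_dvd' hδ1').1 hδ1.symm)
    have h3 : Nat.gcd m r ∣ 1 := by
      have := Nat.dvd_sub h1 h2
      rwa [Nat.sub_sub_self hδ1'] at this
    exact Nat.dvd_one.mp h3
  set w := δ / m with hwdef
  have hδw : δ = m * w := (Nat.mul_div_cancel' hδm).symm
  have hw1 : 1 ≤ w := (Nat.one_le_div_iff hm).2 (Nat.le_of_dvd (by omega) hδm)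
  -- the target finset V
  set V := (Finset.Icc 1 w).filter (fun v => w ≡ v [MOD r] ∧ w < q * v) with hVdef
  -- the injection from F' to V
  set Φ : ℕ → ℕ := fun x => (x * q ^ (Nat.log q (δ / x))) / m with hΦdef
  have hkey : ∀ x ∈ F', m * Φ x = x * q ^ (Nat.log q (δ / x)) ∧
      x * q ^ (Nat.log q (δ / x)) ≤ δ ∧ δ < q * (x * q ^ (Nat.log q (δ / x))) ∧
      (x * q ^ (Nat.log q (δ / x))) ≡ 1 [MOD r] := by
    intro x hx
    obtain ⟨hxF, hxδ⟩ := Finset.mem_filter.1 hx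
    obtain ⟨hxIcc, hxm, hx1, _⟩ := hFmem x hxF
    have hxpos : 1 ≤ x := (Finset.mem_Icc.1 hxIcc).1
    set t := Nat.log q (δ / x) with htdef
    have hδx1 : 1 ≤ δ / x := (Nat.one_le_div_iff (by omega)).2 hxδ
    have hyle : x * q ^ t ≤ δ := by
      calc x * q ^ t ≤ x * (δ / x) := Nat.mul_le_mul_left x (Nat.pow_log_le_self q (by omega))
        _ = (δ / x) * x := by ring
        _ ≤ δ := Nat.div_mul_le_self δ x
    have hylt : δ < q * (x * q ^ t) := by
      have h1 : δ / x < q ^ (t + 1) := Nat.lt_pow_succ_log_self (by omega) _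
      have h2 : δ < q ^ (t + 1) * x := (Nat.div_lt_iff_lt_mul (by omega)).1 h1
      calc δ < q ^ (t + 1) * x := h2
        _ = q * (x * q ^ t) := by rw [pow_succ]; ring
    have hy1 : x * q ^ t ≡ 1 [MOD r] := by
      have := Nat.ModEq.mul hx1 (hq1r.pow t)
      simpa using this
    have hym : m ∣ x * q ^ t := hxm.mul_right _
    exact ⟨Nat.mul_div_cancel' hym, hyle, hylt, hy1⟩
  have hmaps : ∀ x ∈ F', Φ x ∈ V := by
    intro x hx
    obtain ⟨hΦm, hyle, hylt, hy1⟩ := hkey x hx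
    refine Finset.mem_filter.2 ⟨Finset.mem_Icc.2 ⟨?_, ?_⟩, ?_, ?_⟩
    · -- 1 ≤ Φ x
      by_contra h
      have : Φ x = 0 := by omega
      rw [this, Nat.mul_zero] at hΦm
      obtain ⟨hxF, _⟩ := Finset.mem_filter.1 hx
      obtain ⟨hxIcc, _, _, _⟩ := hFmem x hxF
      have hxpos : 1 ≤ x := (Finset.mem_Icc.1 hxIcc).1
      have : 0 < x * q ^ (Nat.log q (δ / x)) := by positivity
      omega
    · -- Φ x ≤ w
      have : m * Φ x ≤ m * w := by rw [hΦm, ← hδw]; exact hyle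
      exact Nat.le_of_mul_le_mul_left this hm
    · -- w ≡ Φ x [MOD r]
      have hmw : m * w ≡ m * Φ x [MOD r] := by
        calc m * w = δ := hδw.symm
          _ ≡ 1 [MOD r] := hδ1
          _ ≡ m * Φ x [MOD r] := by rw [hΦm]; exact hy1.symm
      exact Nat.ModEq.cancel_left_of_coprime hmr.symm hmw
    · -- w < q * Φ x
      have : m * w < m * (q * Φ x) := by
        calc m * w = δ := hδw.symm
          _ < q * (m * Φ x) := by rw [hΦm]; exact hylt
          _ = m * (q * Φ x) := by ring
      exact Nat.lt_of_mul_lt_mul_left this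
  have hinj : Set.InjOn Φ (F' : Set ℕ) := by
    have hkey2 : ∀ x ∈ F', ∀ x' ∈ F', ∀ t t' : ℕ, t ≤ t' →
        x * q ^ t = x' * q ^ t' → x = x' := by
      intro x hx x' hx' t t' htt' heq
      obtain ⟨hxF, _⟩ := Finset.mem_filter.1 hx
      obtain ⟨hx'F, _⟩ := Finset.mem_filter.1 hx'
      obtain ⟨hxIcc, _, _, hxl⟩ := hFmem x hxF
      obtain ⟨hx'Icc, _, _, hx'l⟩ := hFmem x' hx'F
      have hsplit : x' * q ^ t' = (x' * q ^ (t' - t)) * q ^ t := by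
        rw [mul_assoc, ← pow_add]
        congr 2
        omega
      have hxx : x = x' * q ^ (t' - t) := by
        have := heq.trans hsplit
        exact Nat.eq_of_mul_eq_mul_right (by positivity) this
      have hmem : x ∈ cosetOf q N x' :=
        mem_cosetOf.2 ⟨hxIcc, t' - t, by rw [hxx]⟩
      have hco' : cosetOf q N x = cosetOf q N x' := cosetOf_eq_of_mem hqN hN hmem hx'Icc
      rw [← hxl, hco', hx'l]
    intro x hx x' hx' hΦeq
    simp only [Finset.mem_coe] at hx hx'
    obtain ⟨hΦm, _, _, _⟩ := hkey x hx
    obtain ⟨hΦm', _, _, _⟩ := hkey x' hx'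
    have heq : x * q ^ (Nat.log q (δ / x)) = x' * q ^ (Nat.log q (δ / x')) := by
      rw [← hΦm, ← hΦm', hΦeq]
    rcases le_total (Nat.log q (δ / x)) (Nat.log q (δ / x')) with h | h
    · exact hkey2 x hx x' hx' _ _ h heq
    · exact (hkey2 x' hx' x hx _ _ h heq.symm).symm
  have hFV : F'.card ≤ V.card := Finset.card_le_card_of_injOn Φ hmaps hinj
  -- bound the cardinality of V
  set K := (q * w - w - 1) / (q * r) with hKdef
  have hVcard : V.card ≤ K + 1 := by
    have hmaps2 : ∀ v ∈ V, (w - v) / r ∈ Finset.range (K + 1) := by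
      intro v hv
      obtain ⟨hvIcc, hvmod, hvlt⟩ := Finset.mem_filter.1 hv
      obtain ⟨hv1, hvw⟩ := Finset.mem_Icc.1 hvIcc
      have hrdvd2 : r ∣ w - v := (Nat.modEq_iff_dvd' hvw).1 hvmod.symm
      set t := (w - v) / r with htdef
      have htr : t * r = w - v := Nat.div_mul_cancel hrdvd2
      have hvt : v + t * r = w := by omega
      have hmul : q * v + q * r * t = q * w := by rw [← hvt]; ring
      have hqv : w + 1 ≤ q * v := hvlt
      have hqr0 : 0 < q * r := Nat.mul_pos (by omega) hr
      have htK : t ≤ K := by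
        rw [hKdef]
        apply (Nat.le_div_iff_mul_le hqr0).2
        have hcomm : t * (q * r) = q * r * t := by ring
        omega
      exact Finset.mem_range.2 (by omega)
    have hinj2 : Set.InjOn (fun v => (w - v) / r) (V : Set ℕ) := by
      intro v hv v' hv' heq
      simp only [Finset.mem_coe] at hv hv'
      obtain ⟨hvIcc, hvmod, _⟩ := Finset.mem_filter.1 hv
      obtain ⟨hv'Icc, hv'mod, _⟩ := Finset.mem_filter.1 hv'
      obtain ⟨hv1, hvw⟩ := Finset.mem_Icc.1 hvIcc
      obtain ⟨hv'1, hv'w⟩ := Finset.mem_Icc.1 hv'Icc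
      have h1 : r ∣ w - v := (Nat.modEq_iff_dvd' hvw).1 hvmod.symm
      have h2 : r ∣ w - v' := (Nat.modEq_iff_dvd' hv'w).1 hv'mod.symm
      have e1 : ((w - v) / r) * r = w - v := Nat.div_mul_cancel h1
      have e2 : ((w - v') / r) * r = w - v' := Nat.div_mul_cancel h2
      simp only at heq
      rw [heq] at e1
      omega
    calc V.card ≤ (Finset.range (K + 1)).card :=
          Finset.card_le_card_of_injOn _ hmaps2 hinj2
      _ = K + 1 := Finset.card_range _
  -- the numerical inequality in ℕ
  have hiK : i ≤ K + 1 := le_trans hF'card (le_trans hFV hVcard)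
  clear_value K Φ V F' w δ L F m g
  have hqww : w + 1 ≤ q * w := by
    calc w + 1 ≤ 2 * w := by omega
      _ ≤ q * w := Nat.mul_le_mul_right w hq2
  have hnum : (i - 1) * (q * r) + w + 1 ≤ q * w := by
    have hqr0 : 0 < q * r := Nat.mul_pos (by omega) hr
    have h1 : i - 1 ≤ K := by omega
    rw [hKdef] at h1
    have h2 : (i - 1) * (q * r) ≤ q * w - w - 1 :=
      (Nat.le_div_iff_mul_le hqr0).1 h1
    omega
  -- move to ℚ
  have hnumQ : ((i : ℚ) - 1) * (q * r) + w + 1 ≤ q * w := by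
    have := hnum
    have hcast : ((i - 1 : ℕ) : ℚ) = (i : ℚ) - 1 := by
      push_cast [Nat.cast_sub hi1]; ring
    calc ((i : ℚ) - 1) * (q * r) + w + 1
        = ((i - 1 : ℕ) : ℚ) * ((q : ℚ) * r) + w + 1 := by rw [hcast]
      _ = (((i - 1) * (q * r) + w + 1 : ℕ) : ℚ) := by push_cast; ring
      _ ≤ ((q * w : ℕ) : ℚ) := by exact_mod_cast this
      _ = (q : ℚ) * w := by push_cast; ring
  -- ceiling bounds
  set c : ℤ := ⌈(q * i : ℚ) / ((q : ℚ) - 1)⌉ with hcdef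
  have hq1Q : (0 : ℚ) < (q : ℚ) - 1 := by
    have : (2 : ℚ) ≤ q := by exact_mod_cast hq2
    linarith
  have hc1 : (i : ℤ) + 1 ≤ c := by
    have : (i : ℤ) < c := Int.lt_ceil.2 (by
      rw [lt_div_iff₀ hq1Q]
      push_cast
      have hi1Q : (1 : ℚ) ≤ i := by exact_mod_cast hi1
      nlinarith only [hi1Q, hq1Q])
    omega
  have hc2 : (c : ℤ) * (q - 1) ≤ q * i + q - 2 := by
    have h1 : (c : ℚ) < (q * i : ℚ) / ((q : ℚ) - 1) + 1 := Int.ceil_lt_add_one _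
    have h2' : ((c : ℚ) - 1) * ((q : ℚ) - 1) < q * i := by
      rw [← lt_div_iff₀ hq1Q]
      linarith only [h1]
    have h3 : (c : ℤ) * (q - 1) < q * i + q - 1 := by
      have hcast : ((c * ((q : ℤ) - 1) : ℤ) : ℚ) < (((q : ℤ) * i + q - 1 : ℤ) : ℚ) := by
        push_cast
        nlinarith only [h2']
      exact_mod_cast hcast
    omega
  -- the key integer inequality : 1 + (c - 2) * r ≤ w
  have hwZ : (1 : ℤ) + (c - 2) * r ≤ (w : ℤ) := by
    have hB : ((i : ℤ) - 1) * (q * r) + w + 1 ≤ q * w := by exact_mod_cast hnumQ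
    have hr1 : (1 : ℤ) ≤ r := by exact_mod_cast hr
    have hq1 : (2 : ℤ) ≤ q := by exact_mod_cast hq2
    have hA : (c - 2) * ((q : ℤ) - 1) ≤ q * (i - 1) := by nlinarith only [hc2, hr1, hq1]
    have hAr : (c - 2) * ((q : ℤ) - 1) * r ≤ q * (i - 1) * r :=
      mul_le_mul_of_nonneg_right hA (by omega)
    have hlt : (c - 2) * r * ((q : ℤ) - 1) < w * ((q : ℤ) - 1) := by nlinarith only [hAr, hB]
    have : (c - 2) * r < (w : ℤ) := lt_of_mul_lt_mul_right hlt (by omega)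
    omega
  -- conclude
  have hδQ : (δ : ℚ) = (m : ℚ) * w := by exact_mod_cast hδw
  have hNQ : (N : ℚ) = (m : ℚ) * g := by exact_mod_cast hmg.symm
  have hgQ0 : (0 : ℚ) < g := by exact_mod_cast hgpos
  have hmQ : (0 : ℚ) ≤ m := by
    have h0 : (0 : ℕ) ≤ m := Nat.zero_le m
    exact_mod_cast h0
  have hwQ : 1 + ((c : ℚ) - 2) * r ≤ (w : ℚ) := by exact_mod_cast hwZ
  have hfirst : ((n * r : ℚ) * (1 + ((c : ℚ) - 2) * r)) / (g : ℚ) ≤ (δ : ℚ) := by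
    have hNQ' : ((n : ℚ) * r) = (m : ℚ) * g := by
      rw [← hNQ, hNdef]; push_cast; ring
    rw [hNQ', hδQ, div_le_iff₀ hgQ0]
    have h5 : (m : ℚ) * (1 + ((c : ℚ) - 2) * r) ≤ (m : ℚ) * w :=
      mul_le_mul_of_nonneg_left hwQ hmQ
    nlinarith only [mul_le_mul_of_nonneg_right h5 hgQ0.le, hgQ0]
  constructor
  · exact hfirst
  · have hc1Q : (i : ℚ) - 1 ≤ (c : ℚ) - 2 := by
      have h' : ((i : ℚ) + 1) ≤ (c : ℚ) := by exact_mod_cast hc1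
      linarith only [h']
    have hrQ : (0 : ℚ) ≤ r := by positivity
    have hNrQ : (0 : ℚ) ≤ (n : ℚ) * r := by positivity
    have hple : (n * r : ℚ) * r * ((i : ℚ) - 1) + (n * r : ℚ) ≤
        (n * r : ℚ) * (1 + ((c : ℚ) - 2) * r) := by
      nlinarith only [mul_le_mul_of_nonneg_left (mul_le_mul_of_nonneg_right hc1Q hrQ) hNrQ, hNrQ]
    calc (n * r : ℚ) * r * ((i : ℚ) - 1) / g + (n * r : ℚ) / g
        = ((n * r : ℚ) * r * ((i : ℚ) - 1) + (n * r : ℚ)) / g := (add_div _ _ _).symm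
      _ ≤ ((n * r : ℚ) * (1 + ((c : ℚ) - 2) * r)) / g := by gcongr
      _ ≤ (δ : ℚ) := hfirst
end

section
/- Suppose nr = (q^m−1)/s for positive integers m and s. If N_m ≥ 1, then δ^{(m)}_{⌊N_m/2⌋+1} > 1 + (qN_m/(2(q−1)) − 2)·r as rational numbers; equivalently, 2(q−1)·(δ^{(m)}_{⌊N_m/2⌋+1} − 1) > (q·N_m − 4(q−1))·r. -/
open scoped Classical

section Aux

/-- Transfer of coset membership witnesses. -/
private lemma modeq_transfer {q N m i i' x z : ℕ} (hm : 0 < m)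
    (hqm : q ^ m ≡ 1 [MOD N]) {c d a : ℕ}
    (hxc : x ≡ i * q ^ c [MOD N]) (hxd : x ≡ i' * q ^ d [MOD N])
    (hz : z ≡ i * q ^ a [MOD N]) : ∃ e, z ≡ i' * q ^ e [MOD N] := by
  set X := m * (c + 1) with hX
  have hcX : c + 1 ≤ X := Nat.le_mul_of_pos_left _ hm
  set E := a + (X - c) with hE
  refine ⟨d + E, ?_⟩
  have hpow : (q ^ m) ^ (c + 1) ≡ 1 [MOD N] := by
    have := hqm.pow (c + 1)
    simpa using this
  have key : i * q ^ a * (q ^ m) ^ (c + 1) = i * q ^ c * q ^ E := by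
    rw [← pow_mul, mul_assoc, mul_assoc, ← pow_add, ← pow_add, ← hX]
    congr 2
    omega
  calc z ≡ i * q ^ a [MOD N] := hz
    _ = i * q ^ a * 1 := by ring
    _ ≡ i * q ^ a * ((q ^ m) ^ (c + 1)) [MOD N] := Nat.ModEq.mul_left _ hpow.symm
    _ = (i * q ^ c) * q ^ E := key
    _ ≡ x * q ^ E [MOD N] := hxc.symm.mul_right _
    _ ≡ (i' * q ^ d) * q ^ E [MOD N] := hxd.mul_right _
    _ = i' * q ^ (d + E) := by rw [mul_assoc, ← pow_add]

/-- Two cosets sharing an element are equal. -/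
private lemma cosetOf_eq {q N m i i' x : ℕ} (hm : 0 < m) (hqm : q ^ m ≡ 1 [MOD N])
    (hx : x ∈ cosetOf q N i) (hx' : x ∈ cosetOf q N i') :
    cosetOf q N i = cosetOf q N i' := by
  simp only [cosetOf, Finset.mem_filter, Finset.mem_Icc] at hx hx'
  obtain ⟨_, c, hc⟩ := hx
  obtain ⟨_, d, hd⟩ := hx'
  ext z
  simp only [cosetOf, Finset.mem_filter, Finset.mem_Icc]
  constructor
  · rintro ⟨hzI, a, ha⟩
    exact ⟨hzI, modeq_transfer hm hqm hc hd ha⟩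
  · rintro ⟨hzI, a, ha⟩
    exact ⟨hzI, modeq_transfer hm hqm hd hc ha⟩

end Aux

theorem stmt3 (q n r m s : ℕ) (hq : IsPrimePow q) (hn : 0 < n) (hco : Nat.Coprime n q)
    (hr : 0 < r) (hrdvd : r ∣ q - 1) (hm : 0 < m) (hs : 0 < s)
    (hnrs : n * r * s = q ^ m - 1)
    (hNm : 1 ≤ Ncount q n r m) :
    ((q : ℤ) * (Ncount q n r m : ℤ) - 4 * ((q : ℤ) - 1)) * (r : ℤ) <
      2 * ((q : ℤ) - 1) * ((delta q n r m (Ncount q n r m / 2 + 1) : ℤ) - 1) := by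
  classical
  have hq2 : 2 ≤ q := hq.two_le
  have hq0 : 0 < q := by omega
  -- basic divisibility / congruence facts
  have hdvd : n * r ∣ q ^ m - 1 := ⟨s, hnrs.symm⟩
  have hqpow : 1 ≤ q ^ m := Nat.one_le_pow _ _ hq0
  have hqm1 : q ^ m ≡ 1 [MOD n * r] := ((Nat.modEq_iff_dvd' hqpow).mpr hdvd).symm
  have hcoqq1 : Nat.Coprime q (q - 1) :=
    (Nat.coprime_self_sub_right (by omega)).mpr (Nat.coprime_one_right q)
  have hcopr : Nat.Coprime q r := Nat.Coprime.coprime_dvd_right hrdvd hcoqq1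
  have hcop : Nat.Coprime q (n * r) := Nat.Coprime.mul_right hco.symm hcopr
  have hq1r : q ≡ 1 [MOD r] := ((Nat.modEq_iff_dvd' (by omega : 1 ≤ q)).mpr hrdvd).symm
  set F : Finset (Finset ℕ) := (cosetsIn q n r).filter (fun C => C.card = m) with hF
  set N' : ℕ := Ncount q n r m with hN'
  have hNF : F.card = N' := rfl
  -- basic facts about cosets in F
  have hFco : ∀ C ∈ F, ∃ i, C = cosetOf q (n * r) i := by
    intro C hC
    have h1 := (Finset.mem_filter.mp hC).1
    simp only [cosetsIn, Finset.mem_image] at h1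
    obtain ⟨i, _, hi⟩ := h1
    exact ⟨i, hi.symm⟩
  have hFne : ∀ C ∈ F, C.Nonempty := by
    intro C hC
    have h2 := (Finset.mem_filter.mp hC).2
    exact Finset.card_pos.mp (by rw [h2]; exact hm)
  have hleadmem : ∀ C ∈ F, leader C ∈ C := by
    intro C hC
    exact Nat.sInf_mem (Finset.coe_nonempty.mpr (hFne C hC))
  -- key properties of leaders
  have hprops : ∀ C ∈ F, 1 ≤ leader C ∧ leader C ≡ 1 [MOD r] ∧ ¬ q ∣ leader C := by
    intro C hC
    obtain ⟨i, rfl⟩ := hFco C hC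
    have hx := hleadmem _ hC
    set x := leader (cosetOf q (n * r) i) with hxdef
    have hx' := hx
    simp only [cosetOf, Finset.mem_filter, Finset.mem_Icc] at hx'
    obtain ⟨⟨hx1, hxN⟩, c, hcmod⟩ := hx'
    -- x ≡ 1 [MOD r]
    have hiZ : ∃ iz ∈ Zset n r, cosetOf q (n * r) iz = cosetOf q (n * r) i := by
      have h1 := (Finset.mem_filter.mp hC).1
      simpa [cosetsIn, Finset.mem_image] using h1
    obtain ⟨iz, hizZ, hizEq⟩ := hiZ
    -- x is in the coset of iz as well
    have hxiz : x ∈ cosetOf q (n * r) iz := by rw [hizEq]; exact hx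
    simp only [cosetOf, Finset.mem_filter, Finset.mem_Icc] at hxiz
    obtain ⟨-, cz, hczmod⟩ := hxiz
    have hiz1 : iz ≡ 1 [MOD r] := by
      simp only [Zset, Finset.mem_image, Finset.mem_range] at hizZ
      obtain ⟨k, -, hk⟩ := hizZ
      have : (1 + k * r) % r = 1 % r := by simp [Nat.add_mul_mod_self_right]
      simpa [Nat.ModEq, ← hk] using this
    have hmod_r : x ≡ 1 [MOD r] := by
      have h1 : x ≡ iz * q ^ cz [MOD r] :=
        Nat.ModEq.of_dvd (Dvd.intro_left n rfl) hczmod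
      have h2 : iz * q ^ cz ≡ 1 * 1 ^ cz [MOD r] := hiz1.mul (hq1r.pow cz)
      simpa using h1.trans h2
    refine ⟨hx1, hmod_r, ?_⟩
    -- not divisible by q
    rintro ⟨y, hy⟩
    have hy1 : 1 ≤ y := by
      rcases Nat.eq_zero_or_pos y with h | h
      · subst h; simp at hy; omega
      · exact h
    have hyx : y < x := by
      calc y < 2 * y := by omega
        _ ≤ q * y := Nat.mul_le_mul_right y hq2
        _ = x := hy.symm
    have hymem : y ∈ cosetOf q (n * r) i := by
      simp only [cosetOf, Finset.mem_filter, Finset.mem_Icc]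
      refine ⟨⟨hy1, le_trans (le_of_lt hyx) hxN⟩, c + (m - 1), ?_⟩
      have hcancel : q * y ≡ q * (i * q ^ (c + (m - 1))) [MOD n * r] := by
        have h1 : q * (i * q ^ (c + (m - 1))) = i * q ^ c * q ^ m := by
          rw [mul_comm q _, mul_assoc, ← pow_succ, mul_assoc, ← pow_add]
          congr 2
          omega
        rw [h1, ← hy]
        calc x ≡ i * q ^ c [MOD n * r] := hcmod
          _ = i * q ^ c * 1 := by ring
          _ ≡ i * q ^ c * q ^ m [MOD n * r] := Nat.ModEq.mul_left _ hqm1.symm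
      exact Nat.ModEq.cancel_left_of_coprime (by rw [Nat.gcd_comm]; exact hcop) hcancel
    have : x ≤ y := Nat.sInf_le (Finset.mem_coe.mpr hymem)
    omega
  -- leader is injective on F
  have hinj : Set.InjOn leader ↑F := by
    intro C hC C' hC' hEq
    have hC2 : C ∈ F := hC
    have hC'2 : C' ∈ F := hC'
    obtain ⟨i, rfl⟩ := hFco C hC2
    obtain ⟨i', rfl⟩ := hFco C' hC'2
    have h1 : leader (cosetOf q (n * r) i) ∈ cosetOf q (n * r) i := hleadmem _ hC2
    have h2 : leader (cosetOf q (n * r) i) ∈ cosetOf q (n * r) i' := by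
      rw [hEq]; exact hleadmem _ hC'2
    exact cosetOf_eq hm hqm1 h1 h2
  set L : Finset ℕ := F.image leader with hL
  have hLcard : L.card = N' := by rw [hL, Finset.card_image_of_injOn hinj, hNF]
  set l : List ℕ := leaderList q n r m with hldef
  have hlL : l = Finset.sort L (· ≤ ·) := rfl
  have hlen : l.length = N' := by rw [hlL, Finset.length_sort, hLcard]
  have hsorted : l.Pairwise (· ≤ ·) := by rw [hlL]; exact Finset.pairwise_sort _ _
  have hmem_l : ∀ x, x ∈ l → x ∈ L := by
    intro x hx
    rw [hlL] at hx
    exact (Finset.mem_sort _).mp hx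
  have hnodup : l.Nodup := by rw [hlL]; exact Finset.sort_nodup _ _
  set K : ℕ := N' / 2 + 1 with hK
  have hKN : K ≤ N' := by omega
  have hidx : N' / 2 < l.length := by omega
  set δ : ℕ := l.get ⟨N' / 2, hidx⟩ with hδdef
  have hdelta : delta q n r m (N' / 2 + 1) = δ := by
    rw [delta, show N' / 2 + 1 - 1 = N' / 2 by omega, ← hldef]
    exact List.getD_eq_get l 0 ⟨N' / 2, hidx⟩
  -- properties of elements of L
  have hLprops : ∀ x ∈ L, 1 ≤ x ∧ x ≡ 1 [MOD r] ∧ ¬ q ∣ x := by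
    intro x hx
    rw [hL] at hx
    obtain ⟨C, hC, rfl⟩ := Finset.mem_image.mp hx
    exact hprops C hC
  have hδL : δ ∈ L := hmem_l _ (List.get_mem l ⟨N' / 2, hidx⟩)
  obtain ⟨hδ1, hδmod, -⟩ := hLprops δ hδL
  have hδdvd : r ∣ δ - 1 := (Nat.modEq_iff_dvd' hδ1).mp hδmod.symm
  set u : ℕ := (δ - 1) / r with hu
  have huδ : δ - 1 = u * r := (Nat.div_mul_cancel hδdvd).symm
  -- the set of first K leaders
  set T : Finset ℕ := Finset.image
    (fun i : Fin K => l.get ⟨i.1, by omega⟩) Finset.univ with hT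
  have hTcard : T.card = K := by
    rw [hT, Finset.card_image_of_injective _ ?_, Finset.card_univ, Fintype.card_fin]
    intro a b hab
    have := (hnodup.get_inj_iff).mp hab
    exact Fin.ext (by simpa using congrArg Fin.val this)
  have hTle : ∀ x ∈ T, x ≤ δ ∧ x ∈ L := by
    intro x hx
    rw [hT] at hx
    obtain ⟨i, -, rfl⟩ := Finset.mem_image.mp hx
    constructor
    · exact hsorted.rel_get_of_le (by simp [Fin.le_def]; omega)
    · exact hmem_l _ (List.get_mem l _)
  -- counting sets
  set A : Finset ℕ := (Finset.range (u + 1)).filter (fun i => ¬ q ∣ 1 + i * r) with hA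
  set B : Finset ℕ := (Finset.range (u + 1)).filter (fun i => q ∣ 1 + i * r) with hB
  have hKA : K ≤ A.card := by
    rw [← hTcard]
    apply Finset.card_le_card_of_injOn (fun x => (x - 1) / r)
    · intro x hx
      obtain ⟨hxδ, hxL⟩ := hTle x hx
      obtain ⟨hx1, hxmod, hxndvd⟩ := hLprops x hxL
      have hxdvd : r ∣ x - 1 := (Nat.modEq_iff_dvd' hx1).mp hxmod.symm
      have hxrec : 1 + (x - 1) / r * r = x := by
        rw [Nat.div_mul_cancel hxdvd]; omega
      simp only [hA, Finset.mem_coe, Finset.mem_filter, Finset.mem_range]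
      constructor
      · have : (x - 1) / r ≤ (δ - 1) / r := Nat.div_le_div_right (by omega)
        omega
      · rw [hxrec]; exact hxndvd
    · intro x hx y hy hxy
      obtain ⟨hxδ, hxL⟩ := hTle x hx
      obtain ⟨hyδ, hyL⟩ := hTle y hy
      obtain ⟨hx1, hxmod, -⟩ := hLprops x hxL
      obtain ⟨hy1, hymod, -⟩ := hLprops y hyL
      have hxdvd : r ∣ x - 1 := (Nat.modEq_iff_dvd' hx1).mp hxmod.symm
      have hydvd : r ∣ y - 1 := (Nat.modEq_iff_dvd' hy1).mp hymod.symm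
      have h1 : (x - 1) / r * r = x - 1 := Nat.div_mul_cancel hxdvd
      have h2 : (y - 1) / r * r = y - 1 := Nat.div_mul_cancel hydvd
      simp only at hxy
      have : x - 1 = y - 1 := by
        rw [← h1, ← h2, hxy]
      omega
  -- lower bound for B
  set t : ℕ := (u + 1) / q with ht
  have hBt : t ≤ B.card := by
    -- find i₀ < q with q ∣ 1 + i₀ * r
    have htot : 0 < Nat.totient q := Nat.totient_pos.mpr hq0
    set b : ℕ := r ^ (Nat.totient q - 1) with hb
    have hrb : r * b ≡ 1 [MOD q] := by
      have h1 : r * b = r ^ Nat.totient q := by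
        rw [hb, ← pow_succ']
        congr 1
        omega
      rw [h1]
      exact Nat.ModEq.pow_totient hcopr.symm
    set i₀ : ℕ := ((q - 1) * b) % q with hi₀
    have hi₀q : i₀ < q := Nat.mod_lt _ hq0
    have hi₀dvd : q ∣ 1 + i₀ * r := by
      have h1 : 1 + i₀ * r ≡ 1 + ((q - 1) * b) * r [MOD q] := by
        have : i₀ ≡ (q - 1) * b [MOD q] := Nat.mod_modEq _ _
        exact Nat.ModEq.add_left 1 (this.mul_right r)
      have h2 : 1 + ((q - 1) * b) * r ≡ 1 + (q - 1) * 1 [MOD q] := by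
        have : (q - 1) * b * r = (q - 1) * (r * b) := by ring
        rw [this]
        exact Nat.ModEq.add_left 1 (hrb.mul_left (q - 1))
      have h3 : 1 + (q - 1) * 1 = q := by omega
      have h5 : 1 + i₀ * r ≡ q [MOD q] := by
        have h6 := h1.trans h2
        rwa [h3] at h6
      exact (Nat.modEq_zero_iff_dvd).mp
        (h5.trans ((Nat.modEq_zero_iff_dvd).mpr dvd_rfl))
    have : (Finset.range t).card ≤ B.card := by
      apply Finset.card_le_card_of_injOn (fun k => i₀ + k * q)
      · intro k hk
        rw [Finset.mem_coe, Finset.mem_range] at hk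
        simp only [hB, Finset.mem_coe, Finset.mem_filter, Finset.mem_range]
        constructor
        · have h1 : (k + 1) * q ≤ t * q := Nat.mul_le_mul_right q hk
          have h2 : t * q ≤ u + 1 := by
            rw [ht]
            exact Nat.div_mul_le_self _ _
          have h0 : (k + 1) * q = k * q + q := by ring
          omega
        · have : 1 + (i₀ + k * q) * r = (1 + i₀ * r) + k * r * q := by ring
          rw [this]
          exact dvd_add hi₀dvd (Dvd.intro_left _ rfl)
      · intro a _ b' _ hab
        simp only at hab
        have : a * q = b' * q := by omega
        exact Nat.eq_of_mul_eq_mul_right hq0 this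
    simpa using this
  have hABsum : B.card + A.card = u + 1 := by
    have := Finset.card_filter_add_card_filter_not
      (s := Finset.range (u + 1)) (p := fun i => q ∣ 1 + i * r)
    simpa [hA, hB] using this
  -- arithmetic conclusion
  have hutq : u + 1 < (t + 1) * q := by
    have h1 := Nat.div_add_mod (u + 1) q
    have h2 : (u + 1) % q < q := Nat.mod_lt _ hq0
    calc u + 1 = q * ((u + 1) / q) + (u + 1) % q := h1.symm
      _ < q * t + q := by rw [ht]; omega
      _ = (t + 1) * q := by ring
  have h2K : N' + 1 ≤ 2 * K := by omega
  clear_value δ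
  clear hδdef hδL hδmod hδdvd hTle hTcard hT
  clear T
  clear_value u
  clear hu
  clear_value t
  clear ht
  clear_value A B
  clear hA hB
  clear hmem_l hsorted hnodup hidx hlen hlL hldef hLprops hLcard hL hinj hprops hleadmem hFne hFco hNF hF
  clear l L F
  clear_value N' K
  clear hdvd hqpow hqm1 hcoqq1 hcopr hcop hq1r hnrs hq hco hN'
  -- cast everything to ℤ
  have hKA' : (K : ℤ) ≤ (A.card : ℤ) := by exact_mod_cast hKA
  have hBt' : (t : ℤ) ≤ (B.card : ℤ) := by exact_mod_cast hBt
  have hABsum' : (B.card : ℤ) + (A.card : ℤ) = (u : ℤ) + 1 := by exact_mod_cast hABsum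
  have hutq' : (u : ℤ) + 2 ≤ ((t : ℤ) + 1) * q := by exact_mod_cast hutq
  have h2K' : (N' : ℤ) + 1 ≤ 2 * K := by exact_mod_cast h2K
  have hq2' : (2 : ℤ) ≤ (q : ℤ) := by exact_mod_cast hq2
  have hr1' : (1 : ℤ) ≤ (r : ℤ) := by exact_mod_cast hr
  have hq0' : (0 : ℤ) ≤ (q : ℤ) := by linarith
  have hAcard : (A.card : ℤ) ≤ (u : ℤ) + 1 - t := by linarith
  have hqK : (q : ℤ) * K ≤ q * ((u : ℤ) + 1 - t) :=
    mul_le_mul_of_nonneg_left (le_trans hKA' hAcard) hq0'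
  have hqN : (q : ℤ) * ((N' : ℤ) + 1) ≤ q * (2 * K) :=
    mul_le_mul_of_nonneg_left h2K' hq0'
  have e1 : (q : ℤ) * ((u : ℤ) + 1 - t) = q * u + q - q * t := by ring
  have e2 : ((t : ℤ) + 1) * q = q * t + q := by ring
  have e3 : (q : ℤ) * ((N' : ℤ) + 1) = q * N' + q := by ring
  have e4 : (q : ℤ) * (2 * K) = 2 * (q * K) := by ring
  rw [e1] at hqK
  rw [e2] at hutq'
  rw [e3, e4] at hqN
  have hmain : (q : ℤ) * N' - 4 * ((q : ℤ) - 1) < 2 * ((q : ℤ) - 1) * u := by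
    have expand : 2 * ((q : ℤ) - 1) * u = 2 * (q * u) - 2 * u := by ring
    rw [expand]
    linarith [hqK, hqN, hutq', hq2']
  have hδint : (δ : ℤ) - 1 = (u : ℤ) * r := by
    have h1 : ((δ - 1 : ℕ) : ℤ) = (δ : ℤ) - 1 := by
      have := hδ1; push_cast [Nat.cast_sub hδ1]; ring
    rw [← h1, huδ]; push_cast; ring
  rw [← hK] at hdelta
  rw [hdelta, hδint]
  calc ((q : ℤ) * N' - 4 * ((q : ℤ) - 1)) * r
      < (2 * ((q : ℤ) - 1) * u) * r := by
        apply mul_lt_mul_of_pos_right hmain (by linarith)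
    _ = 2 * ((q : ℤ) - 1) * ((u : ℤ) * r) := by ring
end

section
/- Suppose nr = (q^m−1)/s for positive integers m and s. Let i, j, t be integers with 2i ≥ m+1, q^{m−i} ≥ s+1, 1 ≤ j ≤ q−1, t ≥ 0, and t·(q^{m−i+1}−q) < q^i − j·(q^{m−i}−1) − 1. Then 1 ≤ q^i + qt + j < nr and q^i + qt + j is not a coset leader modulo nr, i.e., it is not the smallest element of its q-cyclotomic coset modulo nr. Moreover, the integers q^i + qt + j, taken over all triples (i, j, t) satisfying these conditions, are pairwise distinct. -/
open scoped Classical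

/-- Under the hypotheses, `q*t + j < q^i`. -/
lemma bound_aux (q m s i j t : ℕ) (hq2 : 2 ≤ q) (hs : 0 < s)
    (hi : m + 1 ≤ 2 * i) (his : s + 1 ≤ q ^ (m - i))
    (hj1 : 1 ≤ j) (hj2 : j ≤ q - 1)
    (ht : (t : ℤ) * ((q : ℤ) ^ (m - i + 1) - (q : ℤ)) <
      (q : ℤ) ^ i - (j : ℤ) * ((q : ℤ) ^ (m - i) - 1) - 1) :
    q * t + j < q ^ i := by
  have him : i < m := by
    by_contra h
    push_neg at h
    have h0 : m - i = 0 := by omega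
    rw [h0, pow_zero] at his
    omega
  have hi1 : 1 ≤ i := by omega
  have hk1 : 1 ≤ m - i := by omega
  have hqk : q ≤ q ^ (m - i) := by
    calc q = q ^ 1 := (pow_one q).symm
    _ ≤ q ^ (m - i) := Nat.pow_le_pow_right (by omega) hk1
  have h1 : (q : ℤ) ^ (m - i + 1) = (q : ℤ) ^ (m - i) * q := by rw [pow_succ]
  have h2 : (2 : ℤ) ≤ (q : ℤ) ^ (m - i) := by exact_mod_cast le_trans hq2 hqk
  have h3 : (1 : ℤ) ≤ (j : ℤ) := by exact_mod_cast hj1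
  have h4 : (0 : ℤ) ≤ (t : ℤ) := Int.natCast_nonneg t
  have h5 : (2 : ℤ) ≤ (q : ℤ) := by exact_mod_cast hq2
  have hq0 : (0 : ℤ) ≤ (q : ℤ) := by linarith
  have h6 : (t : ℤ) * q ≤ (t : ℤ) * ((q : ℤ) ^ (m - i + 1) - q) := by
    rw [h1]
    nlinarith [mul_nonneg (mul_nonneg h4 hq0) (by linarith : (0 : ℤ) ≤ (q : ℤ) ^ (m - i) - 2)]
  have h8 : (1 : ℤ) ≤ (j : ℤ) * ((q : ℤ) ^ (m - i) - 1) := by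
    nlinarith [mul_le_mul h3 (by linarith : (1 : ℤ) ≤ (q : ℤ) ^ (m - i) - 1)
      (by linarith) (by linarith : (0 : ℤ) ≤ (j : ℤ))]
  have htq : (t : ℤ) * q < (q : ℤ) ^ i := by linarith
  have htqn : t * q < q ^ (i - 1) * q := by
    have he : q ^ (i - 1) * q = q ^ i := by rw [← pow_succ]; congr 1; omega
    rw [he]
    exact_mod_cast htq
  have ht' : t < q ^ (i - 1) := Nat.lt_of_mul_lt_mul_right htqn
  have hmul : q * (t + 1) ≤ q * q ^ (i - 1) := Nat.mul_le_mul_left q ht'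
  have hqi : q * q ^ (i - 1) = q ^ i := by rw [← pow_succ']; congr 1; omega
  calc q * t + j ≤ q * t + (q - 1) := by omega
  _ < q * (t + 1) := by have := Nat.mul_add q t 1; omega
  _ ≤ q ^ i := by omega

theorem stmt4 (q n r m s : ℕ) (hq : IsPrimePow q) (hn : 0 < n) (hco : Nat.Coprime n q)
    (hr : 0 < r) (hrdvd : r ∣ q - 1) (hm : 0 < m) (hs : 0 < s)
    (hnrs : n * r * s = q ^ m - 1)
    (i j t : ℕ) (hi : m + 1 ≤ 2 * i) (his : s + 1 ≤ q ^ (m - i))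
    (hj1 : 1 ≤ j) (hj2 : j ≤ q - 1)
    (ht : (t : ℤ) * ((q : ℤ) ^ (m - i + 1) - (q : ℤ)) <
      (q : ℤ) ^ i - (j : ℤ) * ((q : ℤ) ^ (m - i) - 1) - 1) :
    (1 ≤ q ^ i + q * t + j ∧ q ^ i + q * t + j < n * r) ∧
    (∃ y ∈ cosetOf q (n * r) (q ^ i + q * t + j), y < q ^ i + q * t + j) ∧
    (∀ i' j' t' : ℕ, m + 1 ≤ 2 * i' → s + 1 ≤ q ^ (m - i') → 1 ≤ j' → j' ≤ q - 1 →
      (t' : ℤ) * ((q : ℤ) ^ (m - i' + 1) - (q : ℤ)) <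
        (q : ℤ) ^ i' - (j' : ℤ) * ((q : ℤ) ^ (m - i') - 1) - 1 →
      q ^ i + q * t + j = q ^ i' + q * t' + j' → i = i' ∧ j = j' ∧ t = t') := by
  have hq2 : 2 ≤ q := hq.two_le
  have him : i < m := by
    by_contra h
    push_neg at h
    have h0 : m - i = 0 := by omega
    rw [h0, pow_zero] at his
    omega
  have hi1 : 1 ≤ i := by omega
  have hk1 : 1 ≤ m - i := by omega
  have hN1 : 1 ≤ n * r := Nat.one_le_iff_ne_zero.mpr (by positivity)
  have hqm1 : 1 ≤ q ^ m := Nat.one_le_pow _ _ (by omega)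
  have hqm : q ^ m = n * r * s + 1 := by omega
  set N := n * r with hNdef
  set x := q ^ i + q * t + j with hxdef
  set y0 := t * q ^ (m - i + 1) + j * q ^ (m - i) + 1 with hy0def
  have hty : y0 < x := by
    have h1 : (y0 : ℤ) < (x : ℤ) := by
      rw [hy0def, hxdef]
      push_cast
      linarith [ht]
    exact_mod_cast h1
  have hpow : q ^ i * q ^ (m - i) = q ^ m := by rw [← pow_add]; congr 1; omega
  have hkey : x * q ^ (m - i) = y0 + N * s := by
    calc x * q ^ (m - i)
        = q ^ i * q ^ (m - i) + t * (q ^ (m - i) * q) + j * q ^ (m - i) := by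
          rw [hxdef]; ring
    _ = (N * s + 1) + t * q ^ (m - i + 1) + j * q ^ (m - i) := by
          rw [hpow, hqm, ← pow_succ]
    _ = y0 + N * s := by rw [hy0def]; ring
  have hxN : x < N := by
    by_contra h
    push_neg at h
    have h1 : x * q ^ (m - i) < x + N * s := by
      rw [hkey]; exact Nat.add_lt_add_right hty _
    have h2 : (x : ℤ) * (q : ℤ) ^ (m - i) < (x : ℤ) + (N : ℤ) * s := by exact_mod_cast h1
    have h3 : (s : ℤ) + 1 ≤ (q : ℤ) ^ (m - i) := by exact_mod_cast his
    have h4 : (N : ℤ) ≤ (x : ℤ) := by exact_mod_cast h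
    have h5 : (1 : ℤ) ≤ (N : ℤ) := by exact_mod_cast hN1
    nlinarith
  have hx1 : 1 ≤ x := by
    have h := Nat.one_le_pow i q (by omega)
    rw [hxdef]
    linarith [Nat.zero_le (q * t), Nat.zero_le j]
  refine ⟨⟨hx1, hxN⟩, ⟨y0, ?_, hty⟩, ?_⟩
  · simp only [cosetOf, Finset.mem_filter, Finset.mem_Icc]
    refine ⟨⟨?_, by omega⟩, m - i, ?_⟩
    · rw [hy0def]; exact Nat.le_add_left 1 _
    · show y0 % N = (x * q ^ (m - i)) % N
      rw [hkey, Nat.add_mul_mod_self_left]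
  · intro i' j' t' hi' his' hj1' hj2' ht' heq
    have hb : q * t + j < q ^ i := bound_aux q m s i j t hq2 hs hi his hj1 hj2 ht
    have hb' : q * t' + j' < q ^ i' :=
      bound_aux q m s i' j' t' hq2 hs hi' his' hj1' hj2' ht'
    have hii : i = i' := by
      rcases lt_trichotomy i i' with h | h | h
      · exfalso
        have h1 : q ^ (i + 1) ≤ q ^ i' := Nat.pow_le_pow_right (by omega) (by omega)
        have h2 : q ^ (i + 1) = q * q ^ i := by rw [pow_succ]; ring
        have h3 : 2 * q ^ i ≤ q * q ^ i := Nat.mul_le_mul_right _ hq2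
        have hA : q ^ i' ≤ x := by
          rw [heq]
          exact le_trans (Nat.le_add_right _ (q * t')) (Nat.le_add_right _ j')
        have hB : x < q ^ (i + 1) := by
          rw [hxdef, h2]
          linarith [hb]
        exact lt_irrefl _ (lt_of_le_of_lt hA (lt_of_lt_of_le hB h1))
      · exact h
      · exfalso
        have h1 : q ^ (i' + 1) ≤ q ^ i := Nat.pow_le_pow_right (by omega) (by omega)
        have h2 : q ^ (i' + 1) = q * q ^ i' := by rw [pow_succ]; ring
        have h3 : 2 * q ^ i' ≤ q * q ^ i' := Nat.mul_le_mul_right _ hq2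
        have hA : q ^ i ≤ x := by
          rw [hxdef]
          exact le_trans (Nat.le_add_right _ (q * t)) (Nat.le_add_right _ j)
        have hB : x < q ^ (i' + 1) := by
          rw [heq, h2]
          linarith [hb']
        exact lt_irrefl _ (lt_of_le_of_lt hA (lt_of_lt_of_le hB h1))
    subst hii
    have h5 : q * t + j = q * t' + j' := by
      rw [hxdef] at heq
      linarith [heq]
    have hjj : j = j' := by
      have e1 : (q * t + j) % q = j % q := Nat.mul_add_mod q t j
      have e2 : (q * t' + j') % q = j' % q := Nat.mul_add_mod q t' j'
      rw [h5, e2] at e1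
      rw [Nat.mod_eq_of_lt (by omega), Nat.mod_eq_of_lt (by omega)] at e1
      exact e1.symm
    subst hjj
    have h6 : q * t = q * t' := Nat.add_right_cancel h5
    exact ⟨rfl, rfl, Nat.eq_of_mul_eq_mul_left (by omega) h6⟩
end
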